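/- Let F(E) := 1/(1 + e^E) (the OFTRL response function of the negative entropy regularizer), let L := 1/2 (which is a Lipschitz constant of F), and let c1 := 1/2 − F(1/(20L)) = 1/2 − 1/(1 + e^{1/10}) > 0. Then, with c3 := 1/2, there exist constants δ', c2 > 0 such that for every 0 < δ ≤ δ' and every E ∈ ℝ: (1) if F(E) ≥ 1/(1+δ) then F(E − c1²/(30Lδ)) ≥ (1+c3)/(1+c3+δ); and (2) if F(E) ≥ 1/(2(1+δ)) then F(E − c3·c1²/(120L) + δ/(4L)) ≥ 1/2 + c2. -/

import Mathlib

open Set Real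

/-- The OFTRL response function of the negative entropy regularizer: `F(E) = 1/(1+e^E)`. -/
noncomputable def Fent (E : ℝ) : ℝ := 1 / (1 + Real.exp E)

/-- The Lipschitz constant `L = 1/2` of `Fent`. -/
noncomputable def Lent : ℝ := 1 / 2

/-- `c1 = 1/2 − F(1/(20L))`. -/
noncomputable def c1ent : ℝ := 1 / 2 - Fent (1 / (20 * Lent))

/-- `c3 = 1/2`. -/
noncomputable def c3ent : ℝ := 1 / 2

lemma Fent_hasDerivAt (x : ℝ) :
    HasDerivAt Fent (-(Real.exp x) / (1 + Real.exp x) ^ 2) x := by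
  have h : HasDerivAt (fun x : ℝ => 1 + Real.exp x) (Real.exp x) x :=
    (Real.hasDerivAt_exp x).const_add 1
  have h2 := h.inv (by positivity)
  unfold Fent
  simp only [one_div]
  exact h2

lemma Fent_lip (a b : ℝ) : |Fent a - Fent b| ≤ Lent * |a - b| := by
  have := Convex.norm_image_sub_le_of_norm_hasDerivWithin_le
    (f := Fent) (f' := fun x => -(Real.exp x) / (1 + Real.exp x) ^ 2)
    (C := Lent) (s := Set.univ) (x := b) (y := a)
    (fun x _ => (Fent_hasDerivAt x).hasDerivWithinAt)
    (fun x _ => by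
      rw [Real.norm_eq_abs, abs_div, abs_neg, abs_of_pos (Real.exp_pos x),
        abs_of_pos (by positivity : (0:ℝ) < (1 + Real.exp x) ^ 2)]
      rw [div_le_iff₀ (by positivity)]
      have := Real.exp_pos x
      rw [Lent]
      nlinarith [sq_nonneg (1 - Real.exp x)])
    convex_univ (Set.mem_univ b) (Set.mem_univ a)
  simpa [Real.norm_eq_abs] using this

lemma Fent_anti {a b : ℝ} (h : a ≤ b) : Fent b ≤ Fent a := by
  unfold Fent
  apply one_div_le_one_div_of_le (by positivity)
  exact add_le_add_right (Real.exp_le_exp.2 h) 1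

/-- the main assumption holds for the negative entropy regularizer:
`L = 1/2` is a Lipschitz constant of `F`, `c1 = 1/2 − 1/(1+e^{1/10}) > 0`, and with
`c3 = 1/2` there are `δ', c2 > 0` making items (1) and (2) hold. -/
theorem negEnt_main_assumption :
    (∀ a b : ℝ, |Fent a - Fent b| ≤ Lent * |a - b|) ∧
    c1ent = 1 / 2 - 1 / (1 + Real.exp (1 / 10)) ∧
    0 < c1ent ∧
    ∃ δ' c2 : ℝ, 0 < δ' ∧ 0 < c2 ∧
      ∀ δ : ℝ, 0 < δ → δ ≤ δ' → ∀ E : ℝ,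
        (1 / (1 + δ) ≤ Fent E →
          (1 + c3ent) / (1 + c3ent + δ) ≤ Fent (E - c1ent ^ 2 / (30 * Lent * δ))) ∧
        (1 / (2 * (1 + δ)) ≤ Fent E →
          1 / 2 + c2 ≤ Fent (E - c3ent * c1ent ^ 2 / (120 * Lent) + δ / (4 * Lent))) := by
  have hc1eq : c1ent = 1 / 2 - 1 / (1 + Real.exp (1 / 10)) := by
    norm_num [c1ent, Fent, Lent]
  have hc1 : 0 < c1ent := by
    rw [hc1eq]
    have h1 : (1:ℝ) < Real.exp (1/10) := by
      have := Real.add_one_le_exp (1/10); linarith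
    have h2 : (0:ℝ) < 1 + Real.exp (1/10) := by positivity
    rw [sub_pos, div_lt_div_iff₀ h2 (by norm_num)]
    linarith
  refine ⟨Fent_lip, hc1eq, hc1, c1ent ^ 2 / 600,
    Fent (-(c1ent ^ 2 / 240)) - 1 / 2, div_pos (pow_pos hc1 2) (by norm_num), ?_, ?_⟩
  · have he : Real.exp (-(c1ent ^ 2 / 240)) < 1 := by
      rw [Real.exp_lt_one_iff]
      exact neg_lt_zero.2 (div_pos (pow_pos hc1 2) (by norm_num))
    have hp : (0:ℝ) < 1 + Real.exp (-(c1ent ^ 2 / 240)) := by positivity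
    rw [sub_pos, Fent, lt_div_iff₀ hp]
    linarith
  · intro δ hδ hδ' E
    have hexpE : (0:ℝ) < Real.exp E := Real.exp_pos E
    constructor
    · intro h
      -- from hypothesis: exp E ≤ δ
      have hE : Real.exp E ≤ δ := by
        rw [Fent, div_le_div_iff₀ (by positivity) (by positivity)] at h
        linarith
      -- the shift s = c1^2/(15δ) ≥ 1
      have hs : (1:ℝ) ≤ c1ent ^ 2 / (15 * δ) := by
        rw [le_div_iff₀ (by positivity)]
        nlinarith
      have hexp1 : Real.exp (-(c1ent ^ 2 / (15 * δ))) ≤ 1 / 2 := by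
        have h1 : Real.exp (-(c1ent ^ 2 / (15 * δ))) ≤ Real.exp (-1) :=
          Real.exp_le_exp.2 (by linarith)
        have h2 : (2:ℝ) ≤ Real.exp 1 := by
          have := Real.add_one_le_exp 1; linarith
        have h3 : Real.exp (-1) ≤ 1 / 2 := by
          rw [Real.exp_neg, inv_le_comm₀ (Real.exp_pos 1) (by norm_num)]
          linarith
        linarith
      have key : Real.exp (E - c1ent ^ 2 / (30 * Lent * δ)) ≤ 2 * δ / 3 := by
        have : (30 : ℝ) * Lent * δ = 15 * δ := by rw [Lent]; ring
        rw [this, sub_eq_add_neg, Real.exp_add]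
        have := (Real.exp_pos (-(c1ent ^ 2 / (15 * δ)))).le
        calc Real.exp E * Real.exp (-(c1ent ^ 2 / (15 * δ)))
            ≤ δ * (1/2) := by
              apply mul_le_mul hE hexp1 this (by linarith)
          _ ≤ 2 * δ / 3 := by linarith
      rw [Fent, c3ent, div_le_div_iff₀ (by positivity) (by positivity)]
      have := (Real.exp_pos (E - c1ent ^ 2 / (30 * Lent * δ))).le
      nlinarith
    · intro h
      -- from hypothesis: exp E ≤ 1 + 2δ
      have hE : Real.exp E ≤ 1 + 2 * δ := by
        rw [Fent, div_le_div_iff₀ (by positivity) (by positivity)] at h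
        linarith
      have hEle : E ≤ 2 * δ := by
        have h1 : Real.exp E ≤ Real.exp (2 * δ) := by
          have := Real.add_one_le_exp (2 * δ)
          linarith
        exact (Real.exp_le_exp.1 h1)
      have harg : E - c3ent * c1ent ^ 2 / (120 * Lent) + δ / (4 * Lent)
          ≤ -(c1ent ^ 2 / 240) := by
        rw [c3ent, Lent]
        nlinarith
      have := Fent_anti harg
      linarith
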